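/- In the single-bidder convex payment setting, the posted-price mechanism that offers the good at perceived price equal to the median κ (charging actual payment c^{-1}(κ) upon sale) achieves expected revenue at least half the optimal: APX/OPT ≥ 1/2. -/

import Mathlib

open MeasureTheory Set Real

/-- A convex function on `[0,∞)` has a positive supporting slope at any `k > 0`
with `c 0 < c k`. -/
lemma aux_support_slope {c : ℝ → ℝ} (hconv : ConvexOn ℝ (Ici 0) c) {k : ℝ} (hk : 0 < k)
    (h0k : c 0 < c k) :
    ∃ s : ℝ, 0 < s ∧ ∀ a : ℝ, 0 ≤ a → c k + s * (a - k) ≤ c a := by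
  set g : ℝ → ℝ := fun b => (c b - c k) / (b - k) with hg
  set S : Set ℝ := g '' Ioc k (k + 1) with hS
  have hkmem : k ∈ Ici (0:ℝ) := le_of_lt hk
  have hmem : ∀ b, k < b → b ∈ Ici (0:ℝ) := fun b hb => le_of_lt (hk.trans hb)
  have hlb : ∀ y ∈ S, (c k - c 0) / k ≤ y := by
    rintro y ⟨b, hb, rfl⟩
    have h := hconv.secant_mono hkmem (self_mem_Ici) (hmem b hb.1) (ne_of_lt hk)
      (ne_of_gt hb.1) (le_of_lt (hk.trans hb.1))
    have h0 : (c 0 - c k) / (0 - k) = (c k - c 0) / k := by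
      rw [zero_sub, ← neg_div_neg_eq]; ring_nf
    rw [h0] at h
    exact h
  have hne : S.Nonempty := ⟨g (k+1), ⟨k+1, ⟨by linarith, le_rfl⟩, rfl⟩⟩
  have hbdd : BddBelow S := ⟨_, hlb⟩
  refine ⟨sInf S, ?_, ?_⟩
  · have : (c k - c 0) / k ≤ sInf S := le_csInf hne hlb
    have hpos : 0 < (c k - c 0) / k := div_pos (by linarith) hk
    linarith
  · intro a ha
    rcases lt_trichotomy a k with hak | hak | hak
    · -- a < k : slope(a,k) ≤ every element of S
      have hle : (c a - c k) / (a - k) ≤ sInf S := by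
        apply le_csInf hne
        rintro y ⟨b, hb, rfl⟩
        exact hconv.secant_mono hkmem ha (hmem b hb.1) (ne_of_lt hak) (ne_of_gt hb.1)
          (le_of_lt (hak.trans hb.1))
      have hneg : a - k < 0 := by linarith
      rw [div_le_iff_of_neg hneg] at hle
      linarith
    · subst hak; simp
    · -- a > k
      have hsle : sInf S ≤ (c a - c k) / (a - k) := by
        rcases le_or_gt a (k+1) with hcase | hcase
        · exact csInf_le hbdd ⟨a, ⟨hak, hcase⟩, rfl⟩
        · calc sInf S ≤ g (k+1) := csInf_le hbdd ⟨k+1, ⟨by linarith, le_rfl⟩, rfl⟩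
            _ ≤ _ := hconv.secant_mono hkmem (hmem _ (by linarith : k < k+1)) (hmem a hak)
                (by intro h; linarith) (ne_of_gt hak) (by linarith)
      have hpos : 0 < a - k := by linarith
      rw [le_div_iff₀ hpos] at hsle
      linarith

lemma aux_revenue_le_median (vbar : ℝ) (F : ℝ → ℝ)
    (hFmono : StrictMonoOn F (Icc 0 vbar))
    (hF0 : F 0 = 0) (hF1 : F vbar = 1) (h0V : 0 ≤ vbar)
    (v : ℝ → ℝ) (hinv : ∀ q ∈ Icc (0:ℝ) 1, v q ∈ Icc 0 vbar ∧ F (v q) = 1 - q)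
    (hreg : ConcaveOn ℝ (Icc (0:ℝ) 1) (fun q => v q * q))
    (κ : ℝ) (hκmem : κ ∈ Icc 0 vbar) (hκ : F κ = 1/2)
    {r : ℝ} (hr : r ∈ Icc 0 vbar) : r * (1 - F r) ≤ κ := by
  have hFmono' : MonotoneOn F (Icc 0 vbar) := hFmono.monotoneOn
  have h0mem : (0:ℝ) ∈ Icc 0 vbar := ⟨le_rfl, h0V⟩
  have hVmem : vbar ∈ Icc 0 vbar := ⟨h0V, le_rfl⟩
  have hFr0 : 0 ≤ F r := hF0 ▸ hFmono' h0mem hr hr.1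
  have hFr1 : F r ≤ 1 := hF1 ▸ hFmono' hr hVmem hr.2
  rcases le_or_gt (F r) (1/2) with hhalf | hhalf
  · -- r ≤ κ, and 1 - F r ≤ 1
    have hrκ : r ≤ κ := by
      by_contra h
      exact absurd (hκ ▸ hFmono hκmem hr (not_le.mp h)) (not_lt.mpr hhalf)
    calc r * (1 - F r) ≤ r * 1 := by nlinarith [hr.1]
      _ ≤ κ := by linarith
  · -- F r > 1/2 ; use concavity
    set q : ℝ := 1 - F r with hq
    have hq0 : 0 ≤ q := by simp [hq]; linarith
    have hq2 : q < 1/2 := by simp [hq]; linarith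
    have hqmem : q ∈ Icc (0:ℝ) 1 := ⟨hq0, by linarith⟩
    have h1mem : (1:ℝ) ∈ Icc (0:ℝ) 1 := ⟨zero_le_one, le_rfl⟩
    have hhmem : (1/2:ℝ) ∈ Icc (0:ℝ) 1 := ⟨by norm_num, by norm_num⟩
    -- identify v q = r, v 1 = 0, v (1/2) = κ
    have hinj := hFmono.injOn
    obtain ⟨hvq_mem, hvq⟩ := hinv q hqmem
    have hvqr : v q = r := hinj hvq_mem hr (by rw [hvq]; simp [hq])
    obtain ⟨hv1_mem, hv1⟩ := hinv 1 h1mem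
    have hv10 : v 1 = 0 := hinj hv1_mem h0mem (by rw [hv1, hF0]; norm_num)
    obtain ⟨hvh_mem, hvh⟩ := hinv (1/2) hhmem
    have hvhκ : v (1/2) = κ := hinj hvh_mem hκmem (by rw [hvh, hκ]; norm_num)
    -- concavity at λ q + (1-λ) 1 = 1/2 with λ = 1/(2(1-q))
    set l : ℝ := 1 / (2 * (1 - q)) with hl
    have h1q : (0:ℝ) < 1 - q := by linarith
    have hl0 : 0 ≤ l := by positivity
    have hl1 : 0 ≤ 1 - l := by
      rw [hl, sub_nonneg, div_le_one (by linarith)]; linarith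
    have hsum : l + (1 - l) = 1 := by ring
    have hcomb : l • q + (1 - l) • (1:ℝ) = 1/2 := by
      simp only [smul_eq_mul, hl]
      field_simp
      ring
    have hconc := hreg.2 hqmem h1mem hl0 hl1 hsum
    rw [hcomb] at hconc
    have hκ0 : 0 ≤ κ := hκmem.1
    -- v (1/2) * (1/2) ≥ l * (v q * q) + (1-l) * (v 1 * 1)
    simp only [smul_eq_mul] at hconc
    rw [hvhκ, hv10, hvqr] at hconc
    simp only [zero_mul, mul_zero, mul_one, add_zero] at hconc
    -- hconc : l * (r * q) + 0 ≤ κ * (1/2)  (direction check below)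
    -- goal : r * q ≤ κ
    have hlpos : 0 < l := by positivity
    have : r * q ≤ κ * (1/2) / l := by
      rw [le_div_iff₀ hlpos]; linarith [hconc]
    have hdiv : κ * (1/2) / l = κ * (1 - q) := by
      rw [hl]; field_simp
    rw [hdiv] at this
    calc r * (1 - F r) = r * q := by rw [hq]
      _ ≤ κ * (1 - q) := this
      _ ≤ κ := by nlinarith

lemma aux_envelope (V : ℝ) (x u : ℝ → ℝ)
    (hxmono : MonotoneOn x (Icc 0 V))
    (hx1 : ∀ s ∈ Icc 0 V, x s ≤ 1)
    (humono : MonotoneOn u (Icc 0 V)) (hu0 : 0 ≤ u 0)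
    (hstep : ∀ s ∈ Icc 0 V, ∀ w ∈ Icc 0 V, s ≤ w → (w - s) * x s ≤ u w - u s)
    {t : ℝ} (ht : t ∈ Icc 0 V) : ∫ s in (0:ℝ)..t, x s ≤ u t := by
  have hut : 0 ≤ u t := hu0.trans (humono ⟨le_rfl, le_trans ht.1 ht.2⟩ ht ht.1)
  rcases eq_or_lt_of_le ht.1 with h0t | h0t
  · rw [← h0t, intervalIntegral.integral_same]; exact hu0
  -- integrability helpers
  have hsub : ∀ a b : ℝ, 0 ≤ a → a ≤ b → b ≤ V → Icc a b ⊆ Icc 0 V := by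
    intro a b h1 h2 h3; exact Icc_subset_Icc h1 h3
  have hIx : ∀ a b : ℝ, 0 ≤ a → a ≤ b → b ≤ V → IntervalIntegrable x volume a b := by
    intro a b h1 h2 h3
    exact (hxmono.mono (by rw [uIcc_of_le h2]; exact hsub a b h1 h2 h3)).intervalIntegrable
  have hIu : ∀ a b : ℝ, 0 ≤ a → a ≤ b → b ≤ V → IntervalIntegrable u volume a b := by
    intro a b h1 h2 h3
    exact (humono.mono (by rw [uIcc_of_le h2]; exact hsub a b h1 h2 h3)).intervalIntegrable
  apply le_of_forall_pos_le_add
  intro ε hε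
  set δ : ℝ := min ε t with hδdef
  have hδ0 : 0 < δ := lt_min hε h0t
  have hδt : δ ≤ t := min_le_right ε t
  have hδε : δ ≤ ε := min_le_left ε t
  have htV : t ≤ V := ht.2
  have htδ0 : 0 ≤ t - δ := by linarith
  -- pointwise step inequality on [0, t-δ]
  have hpt : ∀ s ∈ Icc 0 (t - δ), δ * x s ≤ u (s + δ) - u s := by
    intro s hs
    have h1 : s ∈ Icc 0 V := ⟨hs.1, by linarith [hs.2]⟩
    have h2 : s + δ ∈ Icc 0 V := ⟨by linarith [hs.1], by linarith [hs.2]⟩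
    have := hstep s h1 (s + δ) h2 (by linarith)
    simpa using this
  -- integrate
  have hIxs : IntervalIntegrable (fun s => δ * x s) volume 0 (t - δ) :=
    (hIx 0 (t-δ) le_rfl htδ0 (by linarith)).const_mul δ
  have hIushift : IntervalIntegrable (fun s => u (s + δ)) volume 0 (t - δ) := by
    have := (hIu δ t (le_of_lt hδ0) (by linarith) htV).comp_add_right δ
    simpa using this
  have hIu1 : IntervalIntegrable u volume 0 (t - δ) := hIu 0 (t-δ) le_rfl htδ0 (by linarith)
  have hint : ∫ s in (0:ℝ)..(t-δ), δ * x s ≤ ∫ s in (0:ℝ)..(t-δ), (u (s + δ) - u s) :=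
    intervalIntegral.integral_mono_on htδ0 hIxs (hIushift.sub hIu1) hpt
  have e1 : ∫ s in (0:ℝ)..(t-δ), δ * x s = δ * ∫ s in (0:ℝ)..(t-δ), x s :=
    intervalIntegral.integral_const_mul δ x
  have e2 : ∫ s in (0:ℝ)..(t-δ), (u (s + δ) - u s)
      = (∫ s in δ..t, u s) - ∫ s in (0:ℝ)..(t-δ), u s := by
    rw [intervalIntegral.integral_sub hIushift hIu1]
    congr 1
    have := intervalIntegral.integral_comp_add_right (a := (0:ℝ)) (b := t - δ) (d := δ) u
    rw [this]; norm_num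
  -- split integrals
  have hIa : IntervalIntegrable u volume 0 δ := hIu 0 δ le_rfl hδ0.le (by linarith)
  have hIb : IntervalIntegrable u volume δ t := hIu δ t hδ0.le hδt htV
  have hIc : IntervalIntegrable u volume (t-δ) t := hIu (t-δ) t htδ0 (by linarith) htV
  have hId : IntervalIntegrable u volume 0 t := hIu 0 t le_rfl h0t.le htV
  have e3 : (∫ s in δ..t, u s) = (∫ s in (0:ℝ)..t, u s) - ∫ s in (0:ℝ)..δ, u s := by
    have := intervalIntegral.integral_add_adjacent_intervals hIa hIb
    linarith
  have e4 : (∫ s in (0:ℝ)..(t-δ), u s) = (∫ s in (0:ℝ)..t, u s) - ∫ s in (t-δ)..t, u s := by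
    have := intervalIntegral.integral_add_adjacent_intervals hIu1 hIc
    linarith
  -- bounds on boundary integrals
  have hb1 : (∫ s in (t-δ)..t, u s) ≤ δ * u t := by
    have : (∫ s in (t-δ)..t, u s) ≤ ∫ _s in (t-δ)..t, u t :=
      intervalIntegral.integral_mono_on (by linarith) hIc intervalIntegrable_const
        (fun s hs => humono ⟨by linarith [hs.1], by linarith [hs.2]⟩ ht hs.2)
    simpa using this.trans_eq (by rw [intervalIntegral.integral_const, smul_eq_mul]; ring)
  have hb2 : 0 ≤ ∫ s in (0:ℝ)..δ, u s := by
    apply intervalIntegral.integral_nonneg hδ0.le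
    intro s hs
    exact hu0.trans (humono ⟨le_rfl, by linarith⟩ ⟨hs.1, by linarith [hs.2]⟩ hs.1)
  -- conclude ∫₀^{t-δ} x ≤ u t
  have hmain : δ * ∫ s in (0:ℝ)..(t-δ), x s ≤ δ * u t := by
    rw [← e1]
    calc ∫ s in (0:ℝ)..(t-δ), δ * x s ≤ _ := hint
      _ = (∫ s in (0:ℝ)..t, u s) - (∫ s in (0:ℝ)..δ, u s)
          - ((∫ s in (0:ℝ)..t, u s) - ∫ s in (t-δ)..t, u s) := by rw [e2, e3, e4]
      _ = (∫ s in (t-δ)..t, u s) - (∫ s in (0:ℝ)..δ, u s) := by ring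
      _ ≤ δ * u t := by linarith
  have hx_le : (∫ s in (0:ℝ)..(t-δ), x s) ≤ u t := le_of_mul_le_mul_left hmain hδ0
  -- tail bound
  have e5 : (∫ s in (0:ℝ)..t, x s) = (∫ s in (0:ℝ)..(t-δ), x s) + ∫ s in (t-δ)..t, x s := by
    rw [intervalIntegral.integral_add_adjacent_intervals (hIx 0 (t-δ) le_rfl htδ0 (by linarith))
      (hIx (t-δ) t htδ0 (by linarith) htV)]
  have hb3 : (∫ s in (t-δ)..t, x s) ≤ δ := by
    have : (∫ s in (t-δ)..t, x s) ≤ ∫ _s in (t-δ)..t, (1:ℝ) :=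
      intervalIntegral.integral_mono_on (by linarith) (hIx (t-δ) t htδ0 (by linarith) htV)
        intervalIntegrable_const
        (fun s hs => hx1 s ⟨by linarith [hs.1], by linarith [hs.2]⟩)
    simpa using this.trans_eq (by rw [intervalIntegral.integral_const, smul_eq_mul]; ring)
  calc (∫ s in (0:ℝ)..t, x s) = _ + _ := e5
    _ ≤ u t + δ := add_le_add hx_le hb3
    _ ≤ u t + ε := by linarith

set_option maxHeartbeats 2000000 in
theorem stmt_19 (vbar : ℝ) (hvbar : 0 < vbar)
    (f F : ℝ → ℝ)
    (hf_cont : ContinuousOn f (Icc 0 vbar))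
    (hf_pos : ∀ t ∈ Icc 0 vbar, 0 < f t)
    (hF : ∀ t ∈ Icc 0 vbar, F t = ∫ s in (0:ℝ)..t, f s)
    (hF1 : F vbar = 1)
    -- regularity: the revenue curve q ↦ v(q) q is concave, v the inverse quantile
    (v : ℝ → ℝ) (hinv : ∀ q ∈ Icc (0:ℝ) 1, v q ∈ Icc 0 vbar ∧ F (v q) = 1 - q)
    (hreg : ConcaveOn ℝ (Icc (0:ℝ) 1) (fun q => v q * q))
    (κ : ℝ) (hκmem : κ ∈ Icc 0 vbar) (hκ : F κ = 1/2)
    (c : ℝ → ℝ) (hconv : ConvexOn ℝ (Ici 0) c)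
    (hmono : StrictMonoOn c (Ici 0)) (hc0 : c 0 = 0)
    (cinvκ : ℝ) (hcinv_nonneg : 0 ≤ cinvκ) (hcinv : c cinvκ = κ)
    (P : Measure ℝ)
    (hP : P = (volume.restrict (Icc 0 vbar)).withDensity (fun t => ENNReal.ofReal (f t)))
    (hPprob : IsProbabilityMeasure P)
    -- an arbitrary BIC, IIR single-bidder mechanism
    (xhat phat : ℝ → ℝ)
    (hx01 : ∀ t ∈ Icc (0:ℝ) vbar, xhat t ∈ Icc (0:ℝ) 1)
    (hp_nonneg : ∀ t ∈ Icc (0:ℝ) vbar, 0 ≤ phat t)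
    (hBIC : ∀ t ∈ Icc (0:ℝ) vbar, ∀ w ∈ Icc (0:ℝ) vbar,
      t * xhat t - c (phat t) ≥ t * xhat w - c (phat w))
    (hIIR : ∀ t ∈ Icc (0:ℝ) vbar, 0 ≤ t * xhat t - c (phat t)) :
    ∫ t, phat t ∂P ≤ 2 * ((1 - F κ) * cinvκ) := by
  have hI : MeasurableSet (Icc (0:ℝ) vbar) := measurableSet_Icc
  set I : Set ℝ := Icc 0 vbar with hIdef
  set μ : Measure ℝ := volume.restrict I with hμdef
  haveI hμfin : IsFiniteMeasure μ := by
    constructor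
    rw [hμdef, Measure.restrict_apply_univ, hIdef, Real.volume_Icc]
    exact ENNReal.ofReal_lt_top
  -- memberships
  have h0mem : (0:ℝ) ∈ I := ⟨le_rfl, hvbar.le⟩
  have hVmem : vbar ∈ I := ⟨hvbar.le, le_rfl⟩
  -- F basics
  have hF0 : F 0 = 0 := by rw [hF 0 h0mem, intervalIntegral.integral_same]
  have hfII : ∀ a b : ℝ, a ∈ I → b ∈ I → IntervalIntegrable f volume a b := by
    intro a b ha hb
    apply ContinuousOn.intervalIntegrable
    apply hf_cont.mono
    rw [hIdef]
    exact uIcc_subset_Icc ha hb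
  have hFsm : StrictMonoOn F I := by
    intro a ha b hb hab
    rw [hF a ha, hF b hb]
    have key : (∫ s in a..b, f s) > 0 := by
      apply intervalIntegral.intervalIntegral_pos_of_pos_on (hfII a b ha hb)
      · intro s hs
        exact hf_pos s ⟨ha.1.trans hs.1.le, hs.2.le.trans hb.2⟩
      · exact hab
    have hsplit := intervalIntegral.integral_add_adjacent_intervals
      (hfII 0 a h0mem ha) (hfII a b ha hb)
    linarith
  have hκpos : 0 < κ := by
    rcases eq_or_lt_of_le hκmem.1 with h | h
    · exfalso; rw [← h] at hκ; rw [hF0] at hκ; norm_num at hκ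
    · exact h
  have hcinvpos : 0 < cinvκ := by
    rcases eq_or_lt_of_le hcinv_nonneg with h | h
    · exfalso; rw [← h, hc0] at hcinv; linarith
    · exact h
  -- allocation and utility
  have hxmono : MonotoneOn xhat I := by
    intro a ha b hb hab
    rcases eq_or_lt_of_le hab with rfl | hab'
    · exact le_rfl
    have h1 := hBIC a ha b hb
    have h2 := hBIC b hb a ha
    nlinarith
  set u : ℝ → ℝ := fun t => t * xhat t - c (phat t) with hudef
  have hu0 : ∀ t ∈ I, 0 ≤ u t := fun t ht => hIIR t ht
  have hstep : ∀ s ∈ I, ∀ w ∈ I, s ≤ w → (w - s) * xhat s ≤ u w - u s := by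
    intro s hs w hw hsw
    have h1 := hBIC w hw s hs
    simp only [hudef]
    nlinarith
  have humono : MonotoneOn u I := by
    intro a ha b hb hab
    have h := hstep a ha b hb hab
    have hx0 : 0 ≤ xhat a := (hx01 a ha).1
    nlinarith
  have henv : ∀ t ∈ I, ∫ s in (0:ℝ)..t, xhat s ≤ u t := by
    intro t ht
    exact aux_envelope vbar xhat u hxmono (fun s hs => (hx01 s hs).2) humono
      (hu0 0 h0mem) hstep ht
  -- clamped extensions
  set clamp : ℝ → ℝ := fun t => max 0 (min t vbar) with hclampdef
  have hclamp_mem : ∀ t, clamp t ∈ I := by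
    intro t
    constructor
    · exact le_max_left _ _
    · exact max_le hvbar.le (min_le_right _ _)
  have hclamp_mono : Monotone clamp := fun a b hab =>
    max_le_max le_rfl (min_le_min_right _ hab)
  have hclamp_id : ∀ t ∈ I, clamp t = t := by
    intro t ht
    rw [hclampdef]
    simp only
    rw [min_eq_left ht.2, max_eq_right ht.1]
  set xt : ℝ → ℝ := fun t => xhat (clamp t) with hxtdef
  set ut : ℝ → ℝ := fun t => u (clamp t) with hutdef
  have hxt_mono : Monotone xt := fun a b hab =>
    hxmono (hclamp_mem a) (hclamp_mem b) (hclamp_mono hab)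
  have hut_mono : Monotone ut := fun a b hab =>
    humono (hclamp_mem a) (hclamp_mem b) (hclamp_mono hab)
  have hxt_meas : Measurable xt := hxt_mono.measurable
  have hut_meas : Measurable ut := hut_mono.measurable
  have hxt_eq : ∀ t ∈ I, xt t = xhat t := fun t ht => by rw [hxtdef]; simp [hclamp_id t ht]
  have hxt01 : ∀ t, 0 ≤ xt t ∧ xt t ≤ 1 := fun t =>
    ⟨(hx01 _ (hclamp_mem t)).1, (hx01 _ (hclamp_mem t)).2⟩
  set pt : ℝ → ℝ := fun t => t * xt t - ut t with hptdef
  have hpt_meas : Measurable pt := (measurable_id.mul hxt_meas).sub hut_meas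
  have hpt_eq : ∀ t ∈ I, pt t = c (phat t) := by
    intro t ht
    rw [hptdef]
    simp only
    rw [hxt_eq t ht, hutdef]
    simp [hclamp_id t ht, hudef]
  have hcmono' : MonotoneOn c (Ici 0) := hmono.monotoneOn
  have hpt_nonneg : ∀ t ∈ I, 0 ≤ pt t := by
    intro t ht
    rw [hpt_eq t ht, ← hc0]
    exact hcmono' self_mem_Ici (hp_nonneg t ht) (hp_nonneg t ht)
  have hpt_le : ∀ t ∈ I, pt t ≤ vbar := by
    intro t ht
    rw [hptdef]
    simp only
    have := hu0 t ht
    rw [hutdef]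
    simp only [hclamp_id t ht]
    have hx := hxt01 t
    nlinarith [ht.1, ht.2]
  -- growth bound for c
  have hgrow : ∀ a : ℝ, cinvκ ≤ a → κ * a ≤ cinvκ * c a := by
    intro a haa
    rcases eq_or_lt_of_le haa with rfl | ha
    · rw [hcinv]; ring_nf; exact le_rfl
    have hA : (0:ℝ) < a := hcinvpos.trans ha
    have hcomb := hconv.2 (show a ∈ Ici (0:ℝ) from hA.le) (Set.self_mem_Ici)
      (show (0:ℝ) ≤ cinvκ / a by positivity)
      (show (0:ℝ) ≤ 1 - cinvκ / a by rw [sub_nonneg, div_le_one hA]; linarith)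
      (show cinvκ / a + (1 - cinvκ / a) = 1 by ring)
    simp only [smul_eq_mul, mul_zero, add_zero] at hcomb
    have harg : cinvκ / a * a = cinvκ := by field_simp
    rw [harg, hcinv, hc0, mul_zero, add_zero] at hcomb
    calc κ * a ≤ (cinvκ / a * c a) * a := by nlinarith
      _ = cinvκ * c a := by field_simp
  have hphat_bd : ∀ t ∈ I, phat t ≤ cinvκ * vbar / κ + cinvκ := by
    intro t ht
    rcases le_or_gt (phat t) cinvκ with h | h
    · have : 0 ≤ cinvκ * vbar / κ := by positivity
      linarith
    · have h1 := hgrow (phat t) h.le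
      have h2 : c (phat t) ≤ vbar := by rw [← hpt_eq t ht]; exact hpt_le t ht
      have : κ * phat t ≤ cinvκ * vbar := by nlinarith
      have h3 : phat t ≤ cinvκ * vbar / κ := by
        rw [le_div_iff₀ hκpos]; nlinarith
      linarith
  -- inverse of c
  set cinv : ℝ → ℝ := fun y => sSup {a | 0 ≤ a ∧ c a ≤ max y 0} with hcinvdef
  have hset_ne : ∀ y : ℝ, (0:ℝ) ∈ {a | 0 ≤ a ∧ c a ≤ max y 0} :=
    fun y => ⟨le_rfl, by rw [hc0]; exact le_max_right _ _⟩
  have hset_bdd : ∀ y : ℝ, BddAbove {a | 0 ≤ a ∧ c a ≤ max y 0} := by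
    intro y
    refine ⟨max cinvκ (cinvκ * max y 0 / κ), ?_⟩
    rintro a ⟨ha0, hay⟩
    rcases le_or_gt a cinvκ with h | h
    · exact le_trans h (le_max_left _ _)
    · have hg := hgrow a h.le
      have : a ≤ cinvκ * max y 0 / κ := by
        rw [le_div_iff₀ hκpos]; nlinarith
      exact this.trans (le_max_right _ _)
  have hcinv_mono : Monotone cinv := by
    intro y1 y2 h
    apply csSup_le_csSup (hset_bdd y2) ⟨0, hset_ne y1⟩
    rintro a ⟨h1, h2⟩
    exact ⟨h1, h2.trans (max_le_max h le_rfl)⟩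
  have hcinv_c : ∀ a : ℝ, 0 ≤ a → cinv (c a) = a := by
    intro a ha
    have hca : 0 ≤ c a := by rw [← hc0]; exact hcmono' Set.self_mem_Ici ha ha
    have hmax : max (c a) 0 = c a := max_eq_left hca
    have hseteq : {b | 0 ≤ b ∧ c b ≤ max (c a) 0} = Icc 0 a := by
      ext b
      simp only [mem_setOf_eq, mem_Icc, hmax]
      constructor
      · rintro ⟨hb0, hb⟩; exact ⟨hb0, (hmono.le_iff_le hb0 ha).1 hb⟩
      · rintro ⟨hb0, hb⟩; exact ⟨hb0, (hmono.le_iff_le hb0 ha).2 hb⟩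
    rw [hcinvdef]
    simp only
    rw [hseteq, csSup_Icc ha]
  have hcinv_meas : Measurable cinv := hcinv_mono.measurable
  have hphat_eqI : ∀ t ∈ I, phat t = cinv (pt t) := fun t ht => by
    rw [hpt_eq t ht, hcinv_c _ (hp_nonneg t ht)]
  have haeμI : ∀ᵐ t ∂μ, t ∈ I := ae_restrict_mem hI
  have hphat_aemeas : AEMeasurable phat μ := by
    apply AEMeasurable.congr ((hcinv_meas.comp hpt_meas).aemeasurable)
    filter_upwards [haeμI] with t ht
    exact (hphat_eqI t ht).symm
  have hPac : P ≪ μ := by rw [hP]; exact withDensity_absolutelyContinuous μ _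
  have haePI : ∀ᵐ t ∂P, t ∈ I := hPac.ae_le haeμI
  have hphat_aemeasP : AEMeasurable phat P := hphat_aemeas.mono' hPac
  have hMp0 : 0 ≤ cinvκ * vbar / κ + cinvκ := by positivity
  have hphat_intP : Integrable phat P := by
    apply Integrable.mono' (integrable_const (cinvκ * vbar / κ + cinvκ))
      hphat_aemeasP.aestronglyMeasurable
    filter_upwards [haePI] with t ht
    rw [Real.norm_eq_abs, abs_le]
    exact ⟨by linarith [hp_nonneg t ht], hphat_bd t ht⟩
  have hcphat_aeP : (fun t => c (phat t)) =ᵐ[P] pt := by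
    filter_upwards [haePI] with t ht
    exact (hpt_eq t ht).symm
  have hcphat_intP : Integrable (fun t => c (phat t)) P := by
    apply Integrable.mono' (integrable_const vbar)
      (((hpt_meas.aemeasurable.mono' hPac).aestronglyMeasurable).congr hcphat_aeP.symm)
    filter_upwards [haePI] with t ht
    rw [Real.norm_eq_abs, abs_le, ← hpt_eq t ht]
    exact ⟨by linarith [hpt_nonneg t ht, hvbar], hpt_le t ht⟩
  -- reduce goal
  have hRHS : 2 * ((1 - F κ) * cinvκ) = cinvκ := by rw [hκ]; ring
  rw [hRHS]
  obtain ⟨sl, hsl_pos, hsl⟩ := aux_support_slope hconv hcinvpos (by rw [hc0, hcinv]; exact hκpos)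
  suffices hkey : ∫ t, c (phat t) ∂P ≤ κ by
    have hpw : ∀ᵐ t ∂P, phat t ≤ cinvκ + (c (phat t) - κ) / sl := by
      filter_upwards [haePI] with t ht
      have h1 := hsl (phat t) (hp_nonneg t ht)
      rw [hcinv] at h1
      have h2 : phat t - cinvκ ≤ (c (phat t) - κ) / sl := by
        rw [le_div_iff₀ hsl_pos]; nlinarith
      linarith
    have hInt1 : Integrable (fun t => (c (phat t) - κ) / sl) P := by
      have h := (hcphat_intP.sub (integrable_const κ)).div_const sl
      exact h
    have hInt2 : Integrable (fun t => cinvκ + (c (phat t) - κ) / sl) P :=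
      (integrable_const cinvκ).add hInt1
    calc ∫ t, phat t ∂P ≤ ∫ t, (cinvκ + (c (phat t) - κ) / sl) ∂P :=
          integral_mono_ae hphat_intP hInt2 hpw
      _ = cinvκ + ((∫ t, c (phat t) ∂P) - κ) / sl := by
          rw [integral_add (integrable_const _) hInt1, integral_const, integral_div,
            integral_sub hcphat_intP (integrable_const κ), integral_const]
          simp [measure_univ]
      _ ≤ cinvκ := by
          have h3 : ((∫ t, c (phat t) ∂P) - κ) / sl ≤ 0 :=
            div_nonpos_of_nonpos_of_nonneg (by linarith) hsl_pos.le
          linarith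
  -- ===== key bound : ∫ c∘phat dP ≤ κ =====
  -- measurable version of f
  have hf_aemeas : AEMeasurable f μ := hf_cont.aemeasurable hI
  set fmk : ℝ → ℝ := hf_aemeas.mk f with hfmkdef
  have hfmk_meas : Measurable fmk := hf_aemeas.measurable_mk
  have hfmk_ae : f =ᵐ[μ] fmk := hf_aemeas.ae_eq_mk
  obtain ⟨Cf, hCf⟩ := isCompact_Icc.exists_bound_of_continuousOn hf_cont
  have hCf0 : 0 ≤ Cf := le_trans (norm_nonneg (f 0)) (hCf 0 h0mem)
  have hfmk_bd : ∀ᵐ t ∂μ, |fmk t| ≤ Cf ∧ 0 ≤ fmk t := by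
    filter_upwards [hfmk_ae, haeμI] with t he ht
    rw [← he]
    exact ⟨by simpa [Real.norm_eq_abs] using hCf t ht, (hf_pos t ht).le⟩
  -- rewrite the P-integral as a μ-integral
  have h6a : ∫ t, c (phat t) ∂P = ∫ t, fmk t * pt t ∂μ := by
    rw [hP]
    have hd : (fun t => ENNReal.ofReal (f t)) =ᵐ[μ] (fun t => ((fmk t).toNNReal : ENNReal)) := by
      filter_upwards [hfmk_ae] with t he
      rw [he]; rfl
    rw [withDensity_congr_ae hd,
      integral_withDensity_eq_integral_smul₀ hfmk_meas.real_toNNReal.aemeasurable]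
    apply integral_congr_ae
    filter_upwards [haeμI, hfmk_bd] with t ht hb
    rw [NNReal.smul_def, Real.coe_toNNReal _ hb.2, hpt_eq t ht]
    rfl
  -- bounded integrability helper on μ
  have hbdd_int : ∀ (g : ℝ → ℝ) (C : ℝ), AEStronglyMeasurable g μ →
      (∀ᵐ t ∂μ, |g t| ≤ C) → Integrable g μ := by
    intro g C hg hb
    exact Integrable.mono' (integrable_const C) hg (by simpa [Real.norm_eq_abs] using hb)
  -- primitive of the allocation
  set H : ℝ → ℝ := fun t => ∫ s in (0:ℝ)..t, xt s with hHdef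
  have hxt_ii : ∀ a b : ℝ, IntervalIntegrable xt volume a b := fun a b =>
    (hxt_mono.monotoneOn _).intervalIntegrable
  have hHcont : Continuous H := intervalIntegral.continuous_primitive hxt_ii 0
  have hH_bd : ∀ t ∈ I, |H t| ≤ vbar := by
    intro t ht
    have h1 : ‖∫ s in (0:ℝ)..t, xt s‖ ≤ 1 * |t - 0| := by
      apply intervalIntegral.norm_integral_le_of_norm_le_const
      intro s _
      rw [Real.norm_eq_abs, abs_le]
      exact ⟨by linarith [(hxt01 s).1], (hxt01 s).2⟩
    rw [Real.norm_eq_abs] at h1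
    calc |H t| ≤ 1 * |t - 0| := h1
      _ = |t| := by ring_nf
      _ ≤ vbar := by rw [abs_of_nonneg ht.1]; exact ht.2
  have h6b : ∀ t ∈ I, pt t ≤ t * xt t - H t := by
    intro t ht
    have h1 : H t = ∫ s in (0:ℝ)..t, xhat s := by
      apply intervalIntegral.integral_congr
      intro s hs
      rw [uIcc_of_le ht.1] at hs
      exact hxt_eq s ⟨hs.1, hs.2.trans ht.2⟩
    have h2 := henv t ht
    rw [hptdef]
    simp only
    rw [hutdef]
    simp only [hclamp_id t ht]
    rw [h1]
    linarith
  -- F extension and bounds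
  set Fe : ℝ → ℝ := fun t => F (clamp t) with hFedef
  have hFe_mono : Monotone Fe := fun a b hab =>
    hFsm.monotoneOn (hclamp_mem a) (hclamp_mem b) (hclamp_mono hab)
  have hFe_meas : Measurable Fe := hFe_mono.measurable
  have hFe_eq : ∀ t ∈ I, Fe t = F t := fun t ht => by rw [hFedef]; simp [hclamp_id t ht]
  have hF01 : ∀ t ∈ I, 0 ≤ F t ∧ F t ≤ 1 := by
    intro t ht
    constructor
    · rw [← hF0]; exact hFsm.monotoneOn h0mem ht ht.1
    · rw [← hF1]; exact hFsm.monotoneOn ht hVmem ht.2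
  have hFe01 : ∀ t, 0 ≤ Fe t ∧ Fe t ≤ 1 := fun t => hF01 _ (hclamp_mem t)
  -- integrability of the main μ-integrands
  have hint_fpt : Integrable (fun t => fmk t * pt t) μ := by
    apply hbdd_int _ (Cf * vbar) (hfmk_meas.mul hpt_meas).aestronglyMeasurable
    filter_upwards [haeμI, hfmk_bd] with t ht hb
    rw [Pi.mul_apply, abs_mul]
    apply mul_le_mul hb.1 _ (abs_nonneg _) hCf0
    rw [abs_le]
    exact ⟨by linarith [hpt_nonneg t ht, hvbar], hpt_le t ht⟩
  have hint_fx : Integrable (fun t => fmk t * (t * xt t)) μ := by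
    apply hbdd_int _ (Cf * vbar)
      (hfmk_meas.mul (measurable_id.mul hxt_meas)).aestronglyMeasurable
    filter_upwards [haeμI, hfmk_bd] with t ht hb
    rw [Pi.mul_apply, abs_mul]
    apply mul_le_mul hb.1 _ (abs_nonneg _) hCf0
    rw [abs_le]
    simp only [Pi.mul_apply, id_eq]
    have h1 : 0 ≤ t * xt t := mul_nonneg ht.1 (hxt01 t).1
    have h2 : t * xt t ≤ t := mul_le_of_le_one_right ht.1 (hxt01 t).2
    exact ⟨by linarith, by linarith [ht.2]⟩
  have hint_fH : Integrable (fun t => fmk t * H t) μ := by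
    apply hbdd_int _ (Cf * vbar) (hfmk_meas.mul hHcont.measurable).aestronglyMeasurable
    filter_upwards [haeμI, hfmk_bd] with t ht hb
    rw [Pi.mul_apply, abs_mul]
    exact mul_le_mul hb.1 (hH_bd t ht) (abs_nonneg _) hCf0
  have hint_x1F : Integrable (fun s => xt s * (1 - Fe s)) μ := by
    apply hbdd_int _ 1 (hxt_meas.mul (measurable_const.sub hFe_meas)).aestronglyMeasurable
    apply Filter.Eventually.of_forall
    intro t
    simp only [Pi.mul_apply, Pi.sub_apply]; rw [abs_mul]
    calc |xt t| * |1 - Fe t| ≤ 1 * 1 := by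
          apply mul_le_mul _ _ (abs_nonneg _) zero_le_one <;> rw [abs_le] <;>
            [skip; skip] <;> constructor <;>
            linarith [(hxt01 t).1, (hxt01 t).2, (hFe01 t).1, (hFe01 t).2]
      _ = 1 := by norm_num
  -- Fubini 1
  have hFub1 : ∫ t, fmk t * H t ∂μ = ∫ s, xt s * (1 - Fe s) ∂μ := by
    set φ : ℝ → ℝ → ℝ := fun s t => if s ≤ t then xt s * fmk t else 0 with hφdef
    have hφmeas : Measurable (Function.uncurry φ) := by
      apply Measurable.ite (measurableSet_le measurable_fst measurable_snd)
      · exact (hxt_meas.comp measurable_fst).mul (hfmk_meas.comp measurable_snd)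
      · exact measurable_const
    have hq : ∀ᵐ p ∂(μ.prod μ), |fmk p.2| ≤ Cf := by
      exact Measure.quasiMeasurePreserving_snd.ae (p := fun t => |fmk t| ≤ Cf)
        (by filter_upwards [hfmk_bd] with t ht using ht.1)
    have hφint : Integrable (Function.uncurry φ) (μ.prod μ) := by
      apply Integrable.mono' (integrable_const Cf) hφmeas.aestronglyMeasurable
      filter_upwards [hq] with p hp
      rw [Real.norm_eq_abs, Function.uncurry]
      simp only [hφdef]
      split_ifs with h
      · rw [abs_mul]
        calc |xt p.1| * |fmk p.2| ≤ 1 * Cf := by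
              apply mul_le_mul _ hp (abs_nonneg _) zero_le_one
              rw [abs_le]; exact ⟨by linarith [(hxt01 p.1).1], (hxt01 p.1).2⟩
          _ = Cf := one_mul Cf
      · simpa using hCf0
    have hswap := integral_integral_swap (f := φ) hφint
    have hinner_t : ∀ t ∈ I, (∫ s, φ s t ∂μ) = fmk t * H t := by
      intro t ht
      have h1 : ∀ s, φ s t = (Iic t).indicator (fun s => xt s * fmk t) s := by
        intro s
        rw [Set.indicator_apply]
        simp [hφdef, mem_Iic]
      simp_rw [h1]
      rw [hμdef, setIntegral_indicator measurableSet_Iic]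
      have h2 : I ∩ Iic t = Icc 0 t := by
        rw [hIdef]
        ext y
        simp only [mem_inter_iff, mem_Icc, mem_Iic]
        constructor
        · rintro ⟨⟨h3, _⟩, h5⟩; exact ⟨h3, h5⟩
        · rintro ⟨h3, h4⟩; exact ⟨⟨h3, h4.trans ht.2⟩, h4⟩
      rw [h2, integral_Icc_eq_integral_Ioc, MeasureTheory.integral_mul_const,
        ← intervalIntegral.integral_of_le ht.1]
      rw [mul_comm]
    have hinner_s : ∀ s ∈ I, (∫ t, φ s t ∂μ) = xt s * (1 - Fe s) := by
      intro s hs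
      have h1 : ∀ t, φ s t = (Ici s).indicator (fun t => xt s * fmk t) t := by
        intro t
        rw [Set.indicator_apply]
        simp [hφdef, mem_Ici]
      simp_rw [h1]
      rw [hμdef, setIntegral_indicator measurableSet_Ici]
      have h2 : I ∩ Ici s = Icc s vbar := by
        rw [hIdef]
        ext y
        simp only [mem_inter_iff, mem_Icc, mem_Ici]
        constructor
        · rintro ⟨⟨_, h4⟩, h5⟩; exact ⟨h5, h4⟩
        · rintro ⟨h3, h4⟩; exact ⟨⟨hs.1.trans h3, h4⟩, h3⟩
      rw [h2, MeasureTheory.integral_const_mul]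
      have h3 : ∫ t in Icc s vbar, fmk t = 1 - F s := by
        have h4 : ∫ t in Icc s vbar, fmk t = ∫ t in Icc s vbar, f t := by
          apply integral_congr_ae
          apply ae_restrict_of_ae_restrict_of_subset
            (show Icc s vbar ⊆ I by rw [hIdef]; exact Icc_subset_Icc hs.1 le_rfl)
          exact (Filter.EventuallyEq.symm hfmk_ae)
        rw [h4, integral_Icc_eq_integral_Ioc, ← intervalIntegral.integral_of_le hs.2]
        have h5 := intervalIntegral.integral_add_adjacent_intervals
          (hfII 0 s h0mem hs) (hfII s vbar hs hVmem)
        rw [← hF s hs, ← hF vbar hVmem] at h5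
        rw [hF1] at h5
        linarith
      rw [h3, hFe_eq s hs]
    calc ∫ t, fmk t * H t ∂μ = ∫ t, (∫ s, φ s t ∂μ) ∂μ := by
          apply integral_congr_ae
          filter_upwards [haeμI] with t ht
          exact (hinner_t t ht).symm
      _ = ∫ s, (∫ t, φ s t ∂μ) ∂μ := hswap.symm
      _ = ∫ s, xt s * (1 - Fe s) ∂μ := by
          apply integral_congr_ae
          filter_upwards [haeμI] with s hs
          exact hinner_s s hs
  -- FTC infrastructure
  have hFcont : ContinuousOn F I := by
    have hfint : IntegrableOn f I volume := hf_cont.integrableOn_compact isCompact_Icc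
    apply ContinuousOn.congr (intervalIntegral.continuousOn_primitive hfint)
    intro t ht
    rw [hF t ht, intervalIntegral.integral_of_le ht.1]
  have hFderiv : ∀ t ∈ Ioo (0:ℝ) vbar, HasDerivAt F (f t) t := by
    intro t ht
    have htI : t ∈ I := ⟨ht.1.le, ht.2.le⟩
    have hnhds : I ∈ nhds t := Icc_mem_nhds ht.1 ht.2
    have hca : ContinuousAt f t := (hf_cont t htI).continuousAt hnhds
    have h0 : HasDerivAt (fun b => ∫ s in (0:ℝ)..b, f s) (f t) t :=
      intervalIntegral.integral_hasDerivAt_right (hfII 0 t h0mem htI)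
        ⟨I, hnhds, (hf_cont.aemeasurable hI).aestronglyMeasurable⟩ hca
    apply h0.congr_of_eventuallyEq
    filter_upwards [hnhds] with y hy
    exact hF y hy
  have hGderiv : ∀ t ∈ Ioo (0:ℝ) vbar,
      HasDerivAt (fun y => y * (1 - F y)) ((1 - F t) - t * f t) t := by
    intro t ht
    have h1 := (hasDerivAt_id t).mul ((hasDerivAt_const t (1:ℝ)).sub (hFderiv t ht))
    refine HasDerivAt.congr_deriv (f := fun y => y * (1 - F y)) h1 ?_
    simp only [Pi.sub_apply, id_eq]
    ring
  have hg'cont : ContinuousOn (fun t => (1 - F t) - t * f t) I :=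
    (continuousOn_const.sub hFcont).sub (continuousOn_id.mul hf_cont)
  have hGcont : ContinuousOn (fun y => y * (1 - F y)) I :=
    continuousOn_id.mul (continuousOn_const.sub hFcont)
  have hFTC : ∀ r, r ∈ I → (∫ t in r..vbar, ((1 - F t) - t * f t))
      = vbar * (1 - F vbar) - r * (1 - F r) := by
    intro r hr
    apply intervalIntegral.integral_eq_sub_of_hasDeriv_right_of_le hr.2
      (hGcont.mono (Icc_subset_Icc hr.1 le_rfl))
      (fun t ht => (hGderiv t ⟨lt_of_le_of_lt hr.1 ht.1, ht.2⟩).hasDerivWithinAt)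
      ((hg'cont.mono (by rw [uIcc_of_le hr.2]; exact Icc_subset_Icc hr.1 le_rfl)).intervalIntegrable)
  have hGκ : ∀ r ∈ I, r * (1 - F r) ≤ κ := fun r hr =>
    aux_revenue_le_median vbar F hFsm hF0 hF1 hvbar.le v hinv hreg κ hκmem hκ hr
  -- layer cake
  set W : ℝ → ℝ := fun t => t * fmk t - (1 - Fe t) with hWdef
  have hW_meas : Measurable W :=
    (measurable_id.mul hfmk_meas).sub (measurable_const.sub hFe_meas)
  have h7 : ∫ t, xt t * W t ∂μ ≤ κ := by
    set ν : Measure ℝ := volume.restrict (Icc (0:ℝ) 1) with hνdef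
    haveI hνfin : IsFiniteMeasure ν := by
      constructor
      rw [hνdef, Measure.restrict_apply_univ, Real.volume_Icc]
      exact ENNReal.ofReal_lt_top
    set ψ : ℝ → ℝ → ℝ := fun t θ => if θ < xt t then W t else 0 with hψdef
    have hψmeas : Measurable (Function.uncurry ψ) :=
      Measurable.ite (measurableSet_lt measurable_snd (hxt_meas.comp measurable_fst))
        (hW_meas.comp measurable_fst) measurable_const
    have hWbd : ∀ᵐ t ∂μ, |W t| ≤ vbar * Cf + 1 := by
      filter_upwards [haeμI, hfmk_bd] with t ht hb
      have h1 : |t * fmk t| ≤ vbar * Cf := by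
        rw [abs_mul]
        apply mul_le_mul _ hb.1 (abs_nonneg _) hvbar.le
        rw [abs_of_nonneg ht.1]; exact ht.2
      have h2 : |1 - Fe t| ≤ 1 := by
        rw [abs_le]; constructor <;> linarith [(hFe01 t).1, (hFe01 t).2]
      calc |W t| ≤ |t * fmk t| + |1 - Fe t| := abs_sub _ _
        _ ≤ vbar * Cf + 1 := add_le_add h1 h2
    have hqprod : ∀ᵐ p ∂(μ.prod ν), |W p.1| ≤ vbar * Cf + 1 :=
      Measure.quasiMeasurePreserving_fst.ae (p := fun t => |W t| ≤ vbar * Cf + 1) hWbd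
    have hCW0 : (0:ℝ) ≤ vbar * Cf + 1 := by positivity
    have hψint : Integrable (Function.uncurry ψ) (μ.prod ν) := by
      apply Integrable.mono' (integrable_const (vbar * Cf + 1)) hψmeas.aestronglyMeasurable
      filter_upwards [hqprod] with p hp
      rw [Real.norm_eq_abs, Function.uncurry]
      simp only [hψdef]
      split_ifs with h
      · exact hp
      · simpa using hCW0
    have hinner : ∀ t, (∫ θ, ψ t θ ∂ν) = xt t * W t := by
      intro t
      have h1 : ∀ θ, ψ t θ = (Iio (xt t)).indicator (fun _ => W t) θ := by
        intro θ; rw [Set.indicator_apply]; simp [hψdef, mem_Iio]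
      simp_rw [h1]
      rw [hνdef, setIntegral_indicator measurableSet_Iio, setIntegral_const]
      have h2 : Icc (0:ℝ) 1 ∩ Iio (xt t) = Ico 0 (xt t) := by
        ext θ
        simp only [mem_inter_iff, mem_Icc, mem_Iio, mem_Ico]
        constructor
        · rintro ⟨⟨h3, _⟩, h5⟩; exact ⟨h3, h5⟩
        · rintro ⟨h3, h4⟩; exact ⟨⟨h3, h4.le.trans (hxt01 t).2⟩, h4⟩
      rw [h2, measureReal_def, Real.volume_Ico, smul_eq_mul,
        ENNReal.toReal_ofReal (by linarith [(hxt01 t).1] : (0:ℝ) ≤ xt t - 0)]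
      ring
    have hθbd : ∀ θ : ℝ, (∫ t, ψ t θ ∂μ) ≤ κ := by
      intro θ
      have h1 : ∀ t, ψ t θ = {t' : ℝ | θ < xt t'}.indicator W t := by
        intro t
        rw [Set.indicator_apply]
        simp only [hψdef, mem_setOf_eq]
      have hA : MeasurableSet {t' : ℝ | θ < xt t'} :=
        measurableSet_lt measurable_const hxt_meas
      simp_rw [h1]
      rw [hμdef, setIntegral_indicator hA]
      set A' : Set ℝ := I ∩ {t' | θ < xt t'} with hA'def
      rcases eq_empty_or_nonempty A' with hemp | hne
      · rw [hemp]
        simp [hκpos.le]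
      · have hbddb : BddBelow A' := ⟨0, fun a ha => ha.1.1⟩
        obtain ⟨a0, ha0⟩ := hne
        set r := sInf A' with hrdef
        have hr0 : 0 ≤ r := le_csInf ⟨a0, ha0⟩ (fun b hb => hb.1.1)
        have hrV : r ≤ vbar := le_trans (csInf_le hbddb ha0) ha0.1.2
        have hrI : r ∈ I := ⟨hr0, hrV⟩
        have hsub1 : Ioc r vbar ⊆ A' := by
          intro t' ht'
          obtain ⟨a, ha, hat⟩ := (csInf_lt_iff hbddb ⟨a0, ha0⟩).1 ht'.1
          exact ⟨⟨hr0.trans ht'.1.le, ht'.2⟩, lt_of_lt_of_le ha.2 (hxt_mono hat.le)⟩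
        have hsub2 : A' \ Ioc r vbar ⊆ {r} := by
          rintro a ⟨ha1, ha2⟩
          simp only [mem_Ioc, not_and, not_lt] at ha2
          have h3 : r ≤ a := csInf_le hbddb ha1
          have h4 : a ≤ vbar := ha1.1.2
          rcases eq_or_lt_of_le h3 with h | h
          · simp [← h]
          · exact absurd h4 (ha2 h)
        have haeq : A' =ᵐ[volume] Ioc r vbar := by
          apply ae_eq_set.2
          constructor
          · exact measure_mono_null hsub2 (measure_singleton r)
          · rw [diff_eq_empty.2 hsub1]
            exact measure_empty
        rw [setIntegral_congr_set haeq]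
        have hcong : (∫ t in Ioc r vbar, W t) = ∫ t in Ioc r vbar, (t * f t - (1 - F t)) := by
          apply integral_congr_ae
          apply ae_restrict_of_ae_restrict_of_subset
            (show Ioc r vbar ⊆ I from fun a ha => ⟨hr0.trans ha.1.le, ha.2⟩)
          filter_upwards [hfmk_ae, haeμI] with t he ht
          rw [hWdef]
          simp only
          rw [← he, hFe_eq t ht]
        rw [hcong, ← intervalIntegral.integral_of_le hrV]
        have hneg : ∀ t:ℝ, t * f t - (1 - F t) = -((1 - F t) - t * f t) := fun t => by ring
        simp_rw [hneg]
        rw [intervalIntegral.integral_neg, hFTC r hrI, hF1]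
        linarith [hGκ r hrI]
    have hswap2 := integral_integral_swap (f := ψ) hψint
    calc ∫ t, xt t * W t ∂μ = ∫ t, (∫ θ, ψ t θ ∂ν) ∂μ := by
          apply integral_congr_ae
          exact Filter.Eventually.of_forall (fun t => (hinner t).symm)
      _ = ∫ θ, (∫ t, ψ t θ ∂μ) ∂ν := hswap2
      _ ≤ ∫ _θ, κ ∂ν := by
          apply integral_mono_ae hψint.integral_prod_right (integrable_const κ)
          exact Filter.Eventually.of_forall hθbd
      _ = κ := by
          rw [integral_const, measureReal_def, hνdef, Measure.restrict_apply_univ, Real.volume_Icc]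
          simp
  -- assemble everything
  have hint_fxH : Integrable (fun t => fmk t * (t * xt t - H t)) μ := by
    apply hbdd_int _ (Cf * (vbar + vbar))
      (hfmk_meas.mul ((measurable_id.mul hxt_meas).sub hHcont.measurable)).aestronglyMeasurable
    filter_upwards [haeμI, hfmk_bd] with t ht hb
    simp only [Pi.mul_apply, Pi.sub_apply, id_eq]
    rw [abs_mul]
    apply mul_le_mul hb.1 _ (abs_nonneg _) hCf0
    have h1 : 0 ≤ t * xt t := mul_nonneg ht.1 (hxt01 t).1
    have h2 : t * xt t ≤ t := mul_le_of_le_one_right ht.1 (hxt01 t).2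
    have h3 := hH_bd t ht
    rw [abs_le] at h3 ⊢
    exact ⟨by linarith [ht.2], by linarith [ht.2]⟩
  rw [h6a]
  calc ∫ t, fmk t * pt t ∂μ ≤ ∫ t, fmk t * (t * xt t - H t) ∂μ := by
        apply integral_mono_ae hint_fpt hint_fxH
        filter_upwards [haeμI, hfmk_bd] with t ht hb
        exact mul_le_mul_of_nonneg_left (h6b t ht) hb.2
    _ = ∫ t, fmk t * (t * xt t) ∂μ - ∫ t, fmk t * H t ∂μ := by
        simp_rw [mul_sub]
        exact integral_sub hint_fx hint_fH
    _ = ∫ t, fmk t * (t * xt t) ∂μ - ∫ s, xt s * (1 - Fe s) ∂μ := by rw [hFub1]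
    _ = ∫ t, xt t * W t ∂μ := by
        rw [← integral_sub hint_fx hint_x1F]
        apply integral_congr_ae
        apply Filter.Eventually.of_forall
        intro t
        rw [hWdef]
        simp only
        ring
    _ ≤ κ := h7
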